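/- Consider the linear system x[t+1] = A x[t] + B u[t] + v[t] for t = 0,…,N with given initial state x[0] ∈ ℝ^n and given disturbance sequence v[0],…,v[N] ∈ ℝ^n, and the cost J(u) = Σ_{t=0}^{N} ( x[t]^T Q x[t] + u[t]^T R u[t] ) + x[N+1]^T S x[N+1], where x[·] is the trajectory generated by the control sequence u[0],…,u[N] ∈ ℝ^m. Suppose Q is symmetric positive semidefinite, R symmetric positive definite, and S symmetric positive semidefinite solves the discrete algebraic Riccati equation S = A^T S A − A^T S B (B^T S B + R)^{−1} B^T S A + Q. Define K = −(B^T S B + R)^{−1} B^T S A, K_v = −(B^T S B + R)^{−1} B^T, and the backward recursion Π[N+1] = 0, Π[t] = (A + B K)^T Π[t+1] + S v[t]. Then the control sequence u*[t] = K x*[t] + K_v Π[t] (where x* is the trajectory it generates from x[0]) minimizes J over all control sequences, i.e. J(u*) ≤ J(u) for every sequence u[0],…,u[N]. -/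

import Mathlib

open Matrix

lemma dp_swap {n m : ℕ} (M : Matrix (Fin n) (Fin m) ℝ) (x : Fin n → ℝ) (y : Fin m → ℝ) :
    x ⬝ᵥ (M *ᵥ y) = y ⬝ᵥ (Mᵀ *ᵥ x) := by
  rw [dotProduct_mulVec, ← mulVec_transpose, dotProduct_comm]

lemma dp_left {n m : ℕ} (M : Matrix (Fin m) (Fin n) ℝ) (x : Fin n → ℝ) (y : Fin m → ℝ) :
    (M *ᵥ x) ⬝ᵥ y = x ⬝ᵥ (Mᵀ *ᵥ y) := by
  rw [dotProduct_comm, dp_swap]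

lemma step_identity {n m : ℕ}
    (A : Matrix (Fin n) (Fin n) ℝ) (B : Matrix (Fin n) (Fin m) ℝ)
    (Q S : Matrix (Fin n) (Fin n) ℝ) (R G : Matrix (Fin m) (Fin m) ℝ)
    (K Kv : Matrix (Fin m) (Fin n) ℝ)
    (hSs : Sᵀ = S)
    (hGdef : G = Bᵀ * S * B + R)
    (hGs : Gᵀ = G)
    (hGu : IsUnit G.det)
    (hK : K = -(G⁻¹ * Bᵀ * S * A))
    (hKv : Kv = -(G⁻¹ * Bᵀ))
    (hRic : S = Aᵀ * S * A - Aᵀ * S * B * G⁻¹ * Bᵀ * S * A + Q)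
    (a : Fin n → ℝ) (b : Fin m → ℝ) (w P : Fin n → ℝ) :
    a ⬝ᵥ (Q *ᵥ a) + b ⬝ᵥ (R *ᵥ b)
      + ((A *ᵥ a + B *ᵥ b + w) ⬝ᵥ (S *ᵥ (A *ᵥ a + B *ᵥ b + w))
         + 2 * ((P - S *ᵥ w) ⬝ᵥ (A *ᵥ a + B *ᵥ b + w)))
    = (a ⬝ᵥ (S *ᵥ a) + 2 * (((A + B * K)ᵀ *ᵥ P) ⬝ᵥ a))
      + (b - (K *ᵥ a + Kv *ᵥ P)) ⬝ᵥ (G *ᵥ (b - (K *ᵥ a + Kv *ᵥ P)))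
      + (w ⬝ᵥ (S *ᵥ w) + 2 * ((P - S *ᵥ w) ⬝ᵥ w) - P ⬝ᵥ ((B * G⁻¹ * Bᵀ) *ᵥ P)) := by
  have hGis : (G⁻¹)ᵀ = G⁻¹ := by rw [transpose_nonsing_inv, hGs]
  have hQ : Q = S - Aᵀ * S * A + Aᵀ * S * B * G⁻¹ * Bᵀ * S * A := by
    nth_rewrite 1 [hRic]; abel
  have hRb : b ⬝ᵥ (R *ᵥ b) = b ⬝ᵥ (G *ᵥ b) - b ⬝ᵥ ((Bᵀ * (S * B)) *ᵥ b) := by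
    rw [hGdef]; simp only [add_mulVec, dotProduct_add, Matrix.mul_assoc]; ring
  have hQa : a ⬝ᵥ (Q *ᵥ a) = a ⬝ᵥ (S *ᵥ a) - a ⬝ᵥ ((Aᵀ * (S * A)) *ᵥ a)
      + a ⬝ᵥ ((Aᵀ * (S * (B * (G⁻¹ * (Bᵀ * (S * A)))))) *ᵥ a) := by
    rw [hQ]
    simp only [add_mulVec, sub_mulVec, dotProduct_add, dotProduct_sub, Matrix.mul_assoc]
  rw [hRb, hQa]
  subst hK hKv
  have e1 : a ⬝ᵥ (Aᵀ * S) *ᵥ w = w ⬝ᵥ (S * A) *ᵥ a := by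
    rw [dp_swap]; simp [transpose_mul, hSs]
  have e2 : b ⬝ᵥ (Bᵀ * S) *ᵥ w = w ⬝ᵥ (S * B) *ᵥ b := by
    rw [dp_swap]; simp [transpose_mul, hSs]
  have e3 : P ⬝ᵥ B *ᵥ b = b ⬝ᵥ Bᵀ *ᵥ P := by rw [dp_swap]
  have e4 : a ⬝ᵥ (Aᵀ * (S * (B * (G⁻¹ * Bᵀ)))) *ᵥ P
      = P ⬝ᵥ (B * (G⁻¹ * (Bᵀ * (S * A)))) *ᵥ a := by
    rw [dp_swap]; simp [transpose_mul, hSs, hGis, Matrix.mul_assoc]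
  simp only [mulVec_add, add_mulVec, mulVec_sub, sub_mulVec, mulVec_neg, neg_mulVec,
    Matrix.mul_neg, Matrix.neg_mul,
    dotProduct_add, add_dotProduct, dotProduct_sub, sub_dotProduct, dotProduct_neg,
    neg_dotProduct, mulVec_mulVec, dp_left, transpose_mul, transpose_neg, transpose_transpose,
    hSs, hGs, hGis, Matrix.mul_assoc,
    Matrix.mul_nonsing_inv_cancel_left _ _ hGu, Matrix.nonsing_inv_mul_cancel_left _ _ hGu,
    Matrix.nonsing_inv_mul _ hGu, Matrix.mul_nonsing_inv _ hGu, Matrix.mul_one, Matrix.one_mul]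
  linear_combination e1 + e2 + e3 - e4


/-- finite-horizon LQ optimal control with a known disturbance
sequence `v`: the control `u*[t] = K x*[t] + Kᵥ Π[t]`, with `Π` given by the
backward recursion `Π[N+1] = 0`, `Π[t] = (A+BK)ᵀΠ[t+1] + S v[t]`, minimizes
`J(u) = Σ_{t=0}^{N} (x[t]ᵀQx[t] + u[t]ᵀRu[t]) + x[N+1]ᵀSx[N+1]` over all
control sequences. -/
theorem stmt15
    (n m N : ℕ)
    (A : Matrix (Fin n) (Fin n) ℝ) (B : Matrix (Fin n) (Fin m) ℝ)
    (Q S : Matrix (Fin n) (Fin n) ℝ) (R : Matrix (Fin m) (Fin m) ℝ)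
    (hQ : Q.PosSemidef) (hR : R.PosDef) (hS : S.PosSemidef)
    (hRic : S = Aᵀ * S * A - Aᵀ * S * B * (Bᵀ * S * B + R)⁻¹ * Bᵀ * S * A + Q)
    (x0 : Fin n → ℝ) (v : ℕ → Fin n → ℝ)
    (K : Matrix (Fin m) (Fin n) ℝ) (Kv : Matrix (Fin m) (Fin n) ℝ)
    (hK : K = -((Bᵀ * S * B + R)⁻¹ * Bᵀ * S * A))
    (hKv : Kv = -((Bᵀ * S * B + R)⁻¹ * Bᵀ))
    (Pi : ℕ → Fin n → ℝ)
    (hPiN : Pi (N + 1) = 0)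
    (hPi : ∀ t, t ≤ N → Pi t = (A + B * K)ᵀ *ᵥ Pi (t + 1) + S *ᵥ v t)
    (J : (ℕ → Fin n → ℝ) → (ℕ → Fin m → ℝ) → ℝ)
    (hJ : ∀ x u, J x u
      = (∑ t ∈ Finset.range (N + 1), (x t ⬝ᵥ (Q *ᵥ x t) + u t ⬝ᵥ (R *ᵥ u t)))
        + x (N + 1) ⬝ᵥ (S *ᵥ x (N + 1)))
    (xs : ℕ → Fin n → ℝ) (us : ℕ → Fin m → ℝ)
    (hxs0 : xs 0 = x0)
    (hus : ∀ t, t ≤ N → us t = K *ᵥ xs t + Kv *ᵥ Pi t)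
    (hxs : ∀ t, t ≤ N → xs (t + 1) = A *ᵥ xs t + B *ᵥ us t + v t) :
    ∀ (x : ℕ → Fin n → ℝ) (u : ℕ → Fin m → ℝ),
      x 0 = x0 →
      (∀ t, t ≤ N → x (t + 1) = A *ᵥ x t + B *ᵥ u t + v t) →
      J xs us ≤ J x u := by
  intro x u hx0 hdyn
  set G : Matrix (Fin m) (Fin m) ℝ := Bᵀ * S * B + R with hGdef
  have hSs : Sᵀ = S := by
    rw [← conjTranspose_eq_transpose_of_trivial]; exact hS.1
  have hRs : Rᵀ = R := by
    rw [← conjTranspose_eq_transpose_of_trivial]; exact hR.1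
  have hBSB : (Bᵀ * S * B).PosSemidef := by
    have := hS.conjTranspose_mul_mul_same B
    rwa [conjTranspose_eq_transpose_of_trivial] at this
  have hG : G.PosDef := Matrix.PosDef.posSemidef_add hBSB hR
  have hGu : IsUnit G.det := hG.det_pos.ne'.isUnit
  have hGs : Gᵀ = G := by
    rw [hGdef, transpose_add, transpose_mul, transpose_mul, transpose_transpose, hSs, hRs,
      Matrix.mul_assoc]
  have key : ∀ (y : ℕ → Fin n → ℝ) (z : ℕ → Fin m → ℝ),
      (∀ t, t ≤ N → y (t + 1) = A *ᵥ y t + B *ᵥ z t + v t) →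
      J y z = (y 0 ⬝ᵥ (S *ᵥ y 0) + 2 * (((A + B * K)ᵀ *ᵥ Pi 0) ⬝ᵥ y 0))
        + (∑ t ∈ Finset.range (N + 1), (v t ⬝ᵥ (S *ᵥ v t) + 2 * ((Pi t - S *ᵥ v t) ⬝ᵥ v t)
              - Pi t ⬝ᵥ ((B * G⁻¹ * Bᵀ) *ᵥ Pi t)))
        + ∑ t ∈ Finset.range (N + 1),
            (z t - (K *ᵥ y t + Kv *ᵥ Pi t)) ⬝ᵥ (G *ᵥ (z t - (K *ᵥ y t + Kv *ᵥ Pi t))) := by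
    intro y z hdyn'
    rw [hJ]
    have hstep : ∀ t ∈ Finset.range (N + 1),
        y t ⬝ᵥ (Q *ᵥ y t) + z t ⬝ᵥ (R *ᵥ z t)
          = ((y t ⬝ᵥ (S *ᵥ y t) + 2 * (((A + B * K)ᵀ *ᵥ Pi t) ⬝ᵥ y t))
              - (y (t + 1) ⬝ᵥ (S *ᵥ y (t + 1)) + 2 * (((A + B * K)ᵀ *ᵥ Pi (t + 1)) ⬝ᵥ y (t + 1))))
            + ((z t - (K *ᵥ y t + Kv *ᵥ Pi t)) ⬝ᵥ (G *ᵥ (z t - (K *ᵥ y t + Kv *ᵥ Pi t)))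
              + (v t ⬝ᵥ (S *ᵥ v t) + 2 * ((Pi t - S *ᵥ v t) ⬝ᵥ v t)
                  - Pi t ⬝ᵥ ((B * G⁻¹ * Bᵀ) *ᵥ Pi t))) := by
      intro t ht
      have htN : t ≤ N := Nat.lt_succ_iff.mp (Finset.mem_range.mp ht)
      have hid := step_identity A B Q S R G K Kv hSs hGdef hGs hGu hK hKv hRic
        (y t) (z t) (v t) (Pi t)
      rw [(hdyn' t htN).symm] at hid
      have hp : Pi t - S *ᵥ v t = (A + B * K)ᵀ *ᵥ Pi (t + 1) := by
        rw [hPi t htN]; abel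
      rw [← hp]
      linarith [hid]
    rw [Finset.sum_congr rfl hstep, Finset.sum_add_distrib,
      Finset.sum_range_sub' (fun t => y t ⬝ᵥ (S *ᵥ y t) + 2 * (((A + B * K)ᵀ *ᵥ Pi t) ⬝ᵥ y t)),
      Finset.sum_add_distrib]
    simp only [hPiN, mulVec_zero, zero_dotProduct, dotProduct_zero, mul_zero, add_zero]
    ring
  have hkx := key x u hdyn
  have hkxs := key xs us hxs
  rw [hkx, hkxs, hxs0, hx0]
  have hzero : ∀ t ∈ Finset.range (N + 1),
      (us t - (K *ᵥ xs t + Kv *ᵥ Pi t)) ⬝ᵥ (G *ᵥ (us t - (K *ᵥ xs t + Kv *ᵥ Pi t))) = 0 := by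
    intro t ht
    have htN : t ≤ N := Nat.lt_succ_iff.mp (Finset.mem_range.mp ht)
    rw [hus t htN, sub_self]
    simp
  rw [Finset.sum_congr rfl hzero, Finset.sum_const, smul_zero]
  have hnn : 0 ≤ ∑ t ∈ Finset.range (N + 1),
      (u t - (K *ᵥ x t + Kv *ᵥ Pi t)) ⬝ᵥ (G *ᵥ (u t - (K *ᵥ x t + Kv *ᵥ Pi t))) := by
    apply Finset.sum_nonneg
    intro t _
    have := hG.posSemidef.dotProduct_mulVec_nonneg (u t - (K *ᵥ x t + Kv *ᵥ Pi t))
    simpa using this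
  linarith
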